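/- Almost surely there are infinitely many n ∈ ℕ for which κ_n = ∞; that is, ℙ(for every m ∈ ℕ there exists n ≥ m with κ_n = ∞) = 1. -/

import Mathlib

open MeasureTheory ProbabilityTheory Set Filter

/-- **Renewal framework, Claim on infinitely many renewals.**
Almost surely there are infinitely many `n ∈ ℕ` for which `κ n = ∞`. -/
theorem renewal_infinitely_many_renewals
    {Ω E : Type*} {mΩ : MeasurableSpace Ω} [MeasurableSpace E]
    (μ : Measure Ω) [IsProbabilityMeasure μ]
    (ℱ : Filtration ℕ mΩ)
    (κ : ℕ → Ω → ℕ∞) (Y : ℕ → Ω → E)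
    (hκ_stop : ∀ i n : ℕ, MeasurableSet[ℱ n] {ω | κ i ω ≤ (n : ℕ∞)})
    (hY_adapted : ∀ n : ℕ, Measurable[ℱ n] (Y n))
    (h_i : ∀ (n : ℕ) (ω : Ω), (n : ℕ∞) ≤ κ n ω)
    (h_ii : ∀ (m n : ℕ) (ω : Ω), m < n → (n : ℕ∞) ≤ κ m ω → κ n ω ≤ κ m ω)
    (h_iii : ∀ g : (ℕ → E × ℕ∞) → ℝ, Measurable g → (∃ Cg : ℝ, ∀ x, |g x| ≤ Cg) →
      ∀ n : ℕ, 1 ≤ n →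
      μ[fun ω => g (fun k => (Y (n + k) ω, κ (n + k) ω - ((n + k : ℕ) : ℕ∞)))
            * ({ω' | κ n ω' = ⊤}.indicator (fun _ => (1 : ℝ)) ω) | ℱ (n - 1)]
        =ᵐ[μ] fun _ => ∫ ω, g (fun k => (Y k ω, κ k ω - ((k : ℕ) : ℕ∞)))
            * ({ω' | κ 0 ω' = ⊤}.indicator (fun _ => (1 : ℝ)) ω) ∂μ)
    (h_iv : 0 < μ {ω | κ 0 ω = ⊤}) :
    ∀ᵐ ω ∂μ, ∀ m : ℕ, ∃ n ≥ m, κ n ω = ⊤ := by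
  classical
  set p : ℝ := (μ {ω | κ 0 ω = ⊤}).toReal with hp_def
  have hp_pos : 0 < p := ENNReal.toReal_pos h_iv.ne' (measure_ne_top μ _)
  -- measurability of the renewal events
  have hA_eq : ∀ n : ℕ, {ω | κ n ω = ⊤} = (⋃ k : ℕ, {ω | κ n ω ≤ (k : ℕ∞)})ᶜ := by
    intro n
    ext ω
    simp only [mem_compl_iff, mem_iUnion, mem_setOf_eq, not_exists]
    constructor
    · intro h k hk
      rw [h, top_le_iff] at hk
      exact (ENat.coe_ne_top k) hk
    · intro h
      by_contra hne
      obtain ⟨k, hk⟩ := WithTop.ne_top_iff_exists.1 hne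
      exact h k (le_of_eq hk.symm)
  have hA_meas_sup : ∀ n : ℕ, MeasurableSet[⨆ k, (ℱ k : MeasurableSpace Ω)]
      {ω | κ n ω = ⊤} := by
    intro n
    rw [hA_eq n]
    exact (MeasurableSet.iUnion fun k =>
      (le_iSup (fun j => (ℱ j : MeasurableSpace Ω)) k) _ (hκ_stop n k)).compl
  have hsup_le : (⨆ k, (ℱ k : MeasurableSpace Ω)) ≤ mΩ := iSup_le fun k => ℱ.le k
  have hA_meas : ∀ n : ℕ, MeasurableSet {ω | κ n ω = ⊤} := fun n =>
    hsup_le _ (hA_meas_sup n)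
  have hind_int : ∀ n : ℕ,
      Integrable ({ω | κ n ω = ⊤}.indicator (fun _ => (1 : ℝ))) μ := fun n =>
    (integrable_const (1 : ℝ)).indicator (hA_meas n)
  -- the key conditional expectation identity from h_iii with g ≡ 1
  have h_ce : ∀ n : ℕ, 1 ≤ n →
      μ[({ω | κ n ω = ⊤}.indicator (fun _ => (1 : ℝ))) | ℱ (n - 1)]
        =ᵐ[μ] fun _ => p := by
    intro n hn
    have h1 := h_iii (fun _ => (1 : ℝ)) measurable_const ⟨1, fun x => by norm_num⟩ n hn
    simp only [one_mul] at h1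
    rw [integral_indicator_const (1 : ℝ) (hA_meas 0)] at h1
    have h2 : μ.real {ω | κ 0 ω = ⊤} = p := rfl
    simpa [smul_eq_mul, h2] using h1
  -- main argument for each m
  rw [ae_all_iff]
  intro m
  set D : Set Ω := {ω | ∀ n, m ≤ n → κ n ω ≠ ⊤} with hD_def
  have hD_meas_sup : MeasurableSet[⨆ k, (ℱ k : MeasurableSpace Ω)] D := by
    have : D = ⋂ n, ⋂ (_ : m ≤ n), {ω | κ n ω = ⊤}ᶜ := by
      ext ω; simp [hD_def]
    rw [this]
    exact MeasurableSet.iInter fun n => MeasurableSet.iInter fun _ =>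
      (hA_meas_sup n).compl
  have hD_meas : MeasurableSet D := hsup_le _ hD_meas_sup
  set f : Ω → ℝ := D.indicator (fun _ => (1 : ℝ)) with hf_def
  have hf_int : Integrable f μ := (integrable_const (1 : ℝ)).indicator hD_meas
  have hf_sm : StronglyMeasurable[⨆ k, (ℱ k : MeasurableSpace Ω)] f :=
    stronglyMeasurable_const.indicator hD_meas_sup
  have hLevy := hf_int.tendsto_ae_condExp hf_sm
  -- uniform bound on conditional expectations
  have hbound : ∀ j : ℕ, m ≤ j → μ[f | ℱ j] ≤ᵐ[μ] fun _ => 1 - p := by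
    intro j hj
    set n := j + 1 with hn_def
    have hn1 : 1 ≤ n := Nat.le_add_left 1 j
    have key := h_ce n hn1
    simp only [hn_def, Nat.add_sub_cancel] at key
    have hle : f ≤ᵐ[μ] (fun _ => (1 : ℝ)) - {ω | κ n ω = ⊤}.indicator (fun _ => (1 : ℝ)) := by
      refine Filter.Eventually.of_forall fun ω => ?_
      simp only [Pi.sub_apply]
      by_cases hω : ω ∈ D
      · have hω2 : ω ∉ {ω | κ n ω = ⊤} := by
          intro hmem
          exact hω n (le_trans hj (Nat.le_succ j)) hmem
        rw [hf_def, indicator_of_mem hω, indicator_of_notMem hω2]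
        norm_num
      · rw [hf_def, indicator_of_notMem hω]
        by_cases hω2 : ω ∈ {ω | κ n ω = ⊤} <;>
          simp [indicator_of_mem, indicator_of_notMem, hω2]
    have h2 : μ[f | ℱ j] ≤ᵐ[μ]
        μ[(fun _ => (1 : ℝ)) - {ω | κ n ω = ⊤}.indicator (fun _ => (1 : ℝ)) | ℱ j] :=
      condExp_mono hf_int ((integrable_const (1 : ℝ)).sub (hind_int n)) hle
    have h3 := condExp_sub (μ := μ) (m := (ℱ j : MeasurableSpace Ω))
      (integrable_const (1 : ℝ)) (hind_int n)
    have h4 : μ[(fun _ => (1 : ℝ)) | ℱ j] = fun _ => (1 : ℝ) :=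
      condExp_const (ℱ.le j) (1 : ℝ)
    filter_upwards [h2, h3, key] with ω hω2 hω3 hωkey
    have : (μ[(fun _ => (1 : ℝ)) - {ω | κ n ω = ⊤}.indicator (fun _ => (1 : ℝ)) | ℱ j]) ω
        = 1 - (μ[{ω | κ n ω = ⊤}.indicator (fun _ => (1 : ℝ)) | ℱ j]) ω := by
      rw [hω3]; simp [h4]
    rw [this, hωkey] at hω2
    exact hω2
  have hball : ∀ᵐ ω ∂μ, ∀ j : ℕ, m ≤ j → (μ[f | ℱ j]) ω ≤ 1 - p := by
    rw [ae_all_iff]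
    intro j
    by_cases hj : m ≤ j
    · filter_upwards [hbound j hj] with ω hω _; exact hω
    · exact Filter.Eventually.of_forall fun ω h => absurd h hj
  filter_upwards [hLevy, hball] with ω hT hB
  by_contra hc
  push_neg at hc
  have hωD : ω ∈ D := fun n hn hmem => hc n hn hmem
  have hfω : f ω = 1 := by rw [hf_def, indicator_of_mem hωD]
  have hle1 : f ω ≤ 1 - p :=
    le_of_tendsto hT (Filter.eventually_atTop.2 ⟨m, fun j hj => hB j hj⟩)
  rw [hfω] at hle1
  linarith
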